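/- Fix t ∈ (0,1) and t < b < 1. For every θ with b/(b−1) < θ < 1 and every n ∈ ℕ with ⌊nt⌋ ≥ 1, the following Chernoff-type bound holds: P(T_{(⌊nt⌋)} > b) ≤ (1−θ)^{−(n+1−⌊nt⌋)} (1 + θ(1−b)/b)^{−⌊nt⌋}. -/

import Mathlib

open MeasureTheory ProbabilityTheory Filter Set Real
open scoped ENNReal NNReal Classical

noncomputable def orderStat (n : ℕ) (f : Fin n → ℝ) (j : ℕ) : ℝ :=
  sInf {x : ℝ | j ≤ (Finset.univ.filter fun i => f i ≤ x).card}

noncomputable def osProc {Ω : Type*} (T : ℕ → Ω → ℝ) (n : ℕ) (t : ℝ) (ω : Ω) : ℝ :=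
  orderStat n (fun i => T i.1 ω) ⌊(n : ℝ) * t⌋₊

lemma orderStat_gt_iff {n k : ℕ} (hk1 : 1 ≤ k) (hkn : k ≤ n) (f : Fin n → ℝ) {b : ℝ} :
    b < orderStat n f k ↔ (Finset.univ.filter fun i => f i ≤ b).card < k := by
  have hn0 : 0 < n := lt_of_lt_of_le hk1 hkn
  have hne : (Finset.univ : Finset (Fin n)).Nonempty := ⟨⟨0, hn0⟩, Finset.mem_univ _⟩
  set S := {x : ℝ | k ≤ (Finset.univ.filter fun i => f i ≤ x).card} with hS
  have hOS : orderStat n f k = sInf S := rfl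
  have hM : (Finset.univ.sup' hne f) ∈ S := by
    have h1 : (Finset.univ.filter fun i => f i ≤ Finset.univ.sup' hne f) = Finset.univ := by
      apply Finset.filter_true_of_mem
      intro i _
      exact Finset.le_sup' f (Finset.mem_univ i)
    show k ≤ _
    rw [h1, Finset.card_univ, Fintype.card_fin]
    exact hkn
  have hSne : S.Nonempty := ⟨_, hM⟩
  have hbdd : BddBelow S := by
    refine ⟨Finset.univ.inf' hne f, ?_⟩
    intro x hx
    have hpos : 0 < (Finset.univ.filter fun i => f i ≤ x).card := lt_of_lt_of_le hk1 hx
    obtain ⟨i, hi⟩ := Finset.card_pos.mp hpos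
    exact le_trans (Finset.inf'_le f (Finset.mem_univ i)) (Finset.mem_filter.mp hi).2
  rw [hOS]
  constructor
  · intro h
    by_contra hc
    push_neg at hc
    have hbS : b ∈ S := hc
    exact absurd (csInf_le hbdd hbS) (not_le.mpr h)
  · intro hcard
    by_cases hA : (Finset.univ.filter fun i => b < f i).Nonempty
    · set c := (Finset.univ.filter fun i => b < f i).inf' hA f with hc
      have hbc : b < c := by
        rw [hc, Finset.lt_inf'_iff]
        intro i hi
        exact (Finset.mem_filter.mp hi).2
      have hcle : ∀ x ∈ S, c ≤ x := by
        intro x hx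
        by_contra hxc
        push_neg at hxc
        have hsub : (Finset.univ.filter fun i => f i ≤ x) ⊆
            (Finset.univ.filter fun i => f i ≤ b) := by
          intro i hi
          rcases Finset.mem_filter.mp hi with ⟨_, hix⟩
          refine Finset.mem_filter.mpr ⟨Finset.mem_univ _, ?_⟩
          by_contra hib
          push_neg at hib
          have : c ≤ f i := Finset.inf'_le f (Finset.mem_filter.mpr ⟨Finset.mem_univ _, hib⟩)
          linarith
        have h2 := Finset.card_le_card hsub
        have hxS : k ≤ (Finset.univ.filter fun i => f i ≤ x).card := hx
        omega
      exact lt_of_lt_of_le hbc (le_csInf hSne hcle)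
    · exfalso
      have h3 : (Finset.univ.filter fun i => f i ≤ b) = Finset.univ := by
        apply Finset.filter_true_of_mem
        intro i _
        by_contra hib
        push_neg at hib
        exact hA ⟨i, Finset.mem_filter.mpr ⟨Finset.mem_univ _, hib⟩⟩
      rw [h3, Finset.card_univ, Fintype.card_fin] at hcard
      omega

lemma mgf_aux {Ω : Type*} [MeasurableSpace Ω] (P : Measure Ω) [IsProbabilityMeasure P]
    (T : Ω → ℝ) (hTmeas : Measurable T)
    (hTunif : Measure.map T P = volume.restrict (Set.Icc (0 : ℝ) 1))
    (b : ℝ) (hb0 : 0 < b) (hb1 : b ≤ 1) (lam : ℝ) :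
    mgf ((fun x => if x ≤ b then (-1:ℝ) else 0) ∘ T) P lam = b * (exp (-lam) - 1) + 1 := by
  have hφmeas : Measurable fun x : ℝ => if x ≤ b then (-1:ℝ) else 0 :=
    Measurable.ite measurableSet_Iic measurable_const measurable_const
  have hg : Measurable fun x : ℝ => exp (lam * (if x ≤ b then (-1:ℝ) else 0)) :=
    measurable_exp.comp (hφmeas.const_mul lam)
  haveI : IsProbabilityMeasure (volume.restrict (Set.Icc (0:ℝ) 1)) := by
    constructor
    rw [Measure.restrict_apply_univ]
    simp [Real.volume_Icc]
  simp only [mgf]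
  have hmap : ∫ ω, exp (lam * ((fun x => if x ≤ b then (-1:ℝ) else 0) ∘ T) ω) ∂P
      = ∫ x, exp (lam * (if x ≤ b then (-1:ℝ) else 0)) ∂(Measure.map T P) :=
    (integral_map hTmeas.aemeasurable hg.aestronglyMeasurable).symm
  rw [hmap, hTunif]
  have hfun : (fun x : ℝ => exp (lam * (if x ≤ b then (-1:ℝ) else 0)))
      = fun x => (Set.Iic b).indicator (fun _ => exp (-lam) - 1) x + 1 := by
    funext x
    by_cases hx : x ≤ b
    · simp [hx, Set.indicator_of_mem, Set.mem_Iic, mul_neg_one]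
    · simp [hx, Set.indicator_of_notMem, Set.mem_Iic]
  rw [hfun,
    integral_add ((integrable_const _).indicator measurableSet_Iic) (integrable_const 1),
    integral_indicator_const _ measurableSet_Iic, integral_const,
    measureReal_restrict_apply measurableSet_Iic]
  have hIcc : Set.Iic b ∩ Set.Icc 0 1 = Set.Icc 0 b := by
    ext x
    simp only [Set.mem_inter_iff, Set.mem_Iic, Set.mem_Icc]
    constructor
    · rintro ⟨h1, h2, _⟩; exact ⟨h2, h1⟩
    · rintro ⟨h1, h2⟩; exact ⟨h2, h1, h2.trans hb1⟩
  rw [hIcc, Real.volume_real_Icc, probReal_univ]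
  simp [ENNReal.toReal_ofReal hb0.le, max_eq_left hb0.le]

/-- Chernoff bound for the count event, for any `lam ≥ 0`. -/
lemma count_chernoff {Ω : Type*} [MeasurableSpace Ω] (P : Measure Ω) [IsProbabilityMeasure P]
    (T : ℕ → Ω → ℝ)
    (hTmeas : ∀ i, Measurable (T i))
    (hTindep : iIndepFun T P)
    (hTunif : ∀ i, Measure.map (T i) P = volume.restrict (Set.Icc (0 : ℝ) 1))
    (b : ℝ) (hb0 : 0 < b) (hb1 : b ≤ 1) (n k : ℕ) (hk1 : 1 ≤ k) (hkn : k ≤ n)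
    (lam : ℝ) (hlam : 0 ≤ lam) :
    (P {ω | b < orderStat n (fun i => T i.1 ω) k}).toReal ≤
      exp (-lam * (1 - (k:ℝ))) * (b * (exp (-lam) - 1) + 1) ^ n := by
  set φ : ℝ → ℝ := fun x => if x ≤ b then (-1:ℝ) else 0 with hφ
  have hφmeas : Measurable φ := Measurable.ite measurableSet_Iic measurable_const measurable_const
  set Y : ℕ → Ω → ℝ := fun i => φ ∘ T i with hY
  have hYmeas : ∀ i, Measurable (Y i) := fun i => hφmeas.comp (hTmeas i)
  have hYindep : iIndepFun Y P :=
    hTindep.comp (fun _ => φ) (fun _ => hφmeas)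
  set X : Ω → ℝ := ∑ i ∈ Finset.range n, Y i with hX
  have hXapp : ∀ ω, X ω = ∑ i ∈ Finset.range n, Y i ω := by
    intro ω; rw [hX]; exact Finset.sum_apply ω (Finset.range n) Y
  have hXcount : ∀ ω, X ω = -((Finset.univ.filter fun i : Fin n => T i.1 ω ≤ b).card : ℝ) := by
    intro ω
    rw [hXapp, ← Fin.sum_univ_eq_sum_range (fun i => Y i ω) n]
    simp only [hY, hφ, Function.comp]
    rw [Finset.sum_ite, Finset.sum_const, Finset.sum_const]
    simp
  have hXmeas : Measurable X := by
    have h := Finset.measurable_sum (Finset.range n) (fun i _ => hYmeas i)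
    have h2 : X = fun a => ∑ i ∈ Finset.range n, Y i a := funext hXapp
    rw [h2]; exact h
  have hset : {ω | b < orderStat n (fun i => T i.1 ω) k} = {ω | (1:ℝ) - (k:ℝ) ≤ X ω} := by
    ext ω
    simp only [Set.mem_setOf_eq]
    rw [orderStat_gt_iff hk1 hkn, hXcount ω]
    constructor
    · intro h
      have h' : ((Finset.univ.filter fun i : Fin n => T i.1 ω ≤ b).card : ℝ) + 1 ≤ k := by
        exact_mod_cast h
      linarith
    · intro h
      have h' : ((Finset.univ.filter fun i : Fin n => T i.1 ω ≤ b).card : ℝ) + 1 ≤ k := by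
        linarith
      exact_mod_cast h'
  have hXbdd : ∀ ω, |X ω| ≤ (n : ℝ) := by
    intro ω
    rw [hXcount, abs_neg, abs_of_nonneg (by positivity)]
    have h1 : (Finset.univ.filter fun i : Fin n => T i.1 ω ≤ b).card ≤ n := by
      calc (Finset.univ.filter fun i : Fin n => T i.1 ω ≤ b).card
          ≤ (Finset.univ : Finset (Fin n)).card := Finset.card_filter_le _ _
        _ = n := by simp
    exact_mod_cast h1
  have hXint : Integrable (fun ω => exp (lam * X ω)) P := by
    have hm : Measurable fun ω => exp (lam * X ω) :=
      measurable_exp.comp (hXmeas.const_mul lam)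
    refine Integrable.mono' (integrable_const (exp (|lam| * n))) hm.aestronglyMeasurable
      (Filter.Eventually.of_forall fun ω => ?_)
    rw [Real.norm_eq_abs, abs_of_pos (exp_pos _), exp_le_exp]
    calc lam * X ω ≤ |lam * X ω| := le_abs_self _
      _ = |lam| * |X ω| := abs_mul _ _
      _ ≤ |lam| * n := by
          exact mul_le_mul_of_nonneg_left (hXbdd ω) (abs_nonneg _)
  calc (P {ω | b < orderStat n (fun i => T i.1 ω) k}).toReal
      = (P {ω | (1:ℝ) - (k:ℝ) ≤ X ω}).toReal := by rw [hset]
    _ ≤ exp (-lam * ((1:ℝ) - (k:ℝ))) * mgf X P lam :=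
        measure_ge_le_exp_mul_mgf ((1:ℝ) - (k:ℝ)) hlam hXint
    _ = exp (-lam * ((1:ℝ) - (k:ℝ))) * ∏ i ∈ Finset.range n, mgf (Y i) P lam := by
        rw [hX, hYindep.mgf_sum hYmeas]
    _ = exp (-lam * ((1:ℝ) - (k:ℝ))) * (b * (exp (-lam) - 1) + 1) ^ n := by
        congr 1
        rw [Finset.prod_congr rfl fun i _ =>
          mgf_aux P (T i) (hTmeas i) (hTunif i) b hb0 hb1 lam]
        rw [Finset.prod_const, Finset.card_range]

theorem orderedStat_chernoff_upper_tail
    {Ω : Type*} [MeasurableSpace Ω] (P : Measure Ω) [IsProbabilityMeasure P]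
    (T : ℕ → Ω → ℝ)
    (hTmeas : ∀ i, Measurable (T i))
    (hTindep : iIndepFun T P)
    (hTunif : ∀ i, Measure.map (T i) P = volume.restrict (Set.Icc (0 : ℝ) 1))
    (t : ℝ) (ht : t ∈ Set.Ioo (0 : ℝ) 1)
    (b : ℝ) (htb : t < b) (hb : b < 1)
    (θ : ℝ) (hθl : b / (b - 1) < θ) (hθu : θ < 1)
    (n : ℕ) (hn : 1 ≤ ⌊(n : ℝ) * t⌋₊) :
    (P {ω | b < orderStat n (fun i => T i.1 ω) ⌊(n : ℝ) * t⌋₊}).toReal ≤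
      (1 - θ) ^ (-((n : ℝ) + 1 - (⌊(n : ℝ) * t⌋₊ : ℝ))) *
        (1 + θ * (1 - b) / b) ^ (-(⌊(n : ℝ) * t⌋₊ : ℝ)) := by
  set k : ℕ := ⌊(n : ℝ) * t⌋₊ with hk
  have hb0 : 0 < b := lt_trans ht.1 htb
  have h1θ : 0 < 1 - θ := by linarith
  set u : ℝ := 1 + θ * (1 - b) / b with hu
  have hub : 0 < b + θ * (1 - b) := by
    have h1 : θ * (b - 1) < b := (div_lt_iff_of_neg (by linarith : b - 1 < 0)).mp hθl
    nlinarith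
  have hu0 : 0 < u := by
    rw [hu, show 1 + θ * (1 - b) / b = (b + θ * (1 - b)) / b by field_simp]
    exact div_pos hub hb0
  have hkR : (k : ℝ) ≤ (n : ℝ) * t :=
    Nat.floor_le (mul_nonneg (Nat.cast_nonneg n) ht.1.le)
  have hkn : k ≤ n := by
    have h1 : (k : ℝ) ≤ (n : ℝ) := by nlinarith [ht.2, Nat.cast_nonneg (α := ℝ) n]
    exact_mod_cast h1
  have hkb : (k : ℝ) < b * ((n : ℝ) + 1) := by nlinarith [Nat.cast_nonneg (α := ℝ) n]
  rcases lt_or_ge θ 0 with hθneg | hθpos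
  · -- real Chernoff case
    have hu1 : u < 1 := by
      rw [hu]
      have : θ * (1 - b) / b < 0 := div_neg_of_neg_of_pos (by nlinarith) hb0
      linarith
    have hr1 : 1 < (1 - θ) / u := (one_lt_div hu0).mpr (by linarith)
    have hr0 : 0 < (1 - θ) / u := lt_trans one_pos hr1
    set lam : ℝ := Real.log ((1 - θ) / u) with hlam
    have hlam0 : 0 ≤ lam := Real.log_nonneg hr1.le
    have hexp : exp (-lam) = u / (1 - θ) := by
      rw [hlam, ← Real.log_inv, Real.exp_log (inv_pos.mpr hr0), inv_div]
    have hval : b * (exp (-lam) - 1) + 1 = 1 / (1 - θ) := by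
      have h1θ' : (1 - θ) ≠ 0 := ne_of_gt h1θ
      have hb' : b ≠ 0 := ne_of_gt hb0
      rw [hexp, hu]
      field_simp
      ring_nf
    have key := count_chernoff P T hTmeas hTindep hTunif b hb0 hb.le n k hn hkn lam hlam0
    rw [hval] at key
    refine key.trans ?_
    -- now pure real analysis
    have e1 : exp (-lam * (1 - (k:ℝ))) = ((1 - θ) / u) ^ ((k:ℝ) - 1) := by
      rw [Real.rpow_def_of_pos hr0, hlam]
      congr 1
      ring
    have e2 : ((1:ℝ) / (1 - θ)) ^ n = (1 - θ) ^ (-(n:ℝ)) := by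
      rw [Real.rpow_neg h1θ.le, Real.rpow_natCast, one_div, inv_pow]
    have e3 : ((1 - θ) / u) ^ ((k:ℝ) - 1) = (1 - θ) ^ ((k:ℝ) - 1) * u ^ (-((k:ℝ) - 1)) := by
      rw [Real.div_rpow h1θ.le hu0.le, Real.rpow_neg hu0.le, div_eq_mul_inv]
    have e4 : (1 - θ) ^ ((k:ℝ) - 1) * (1 - θ) ^ (-(n:ℝ))
        = (1 - θ) ^ (-((n : ℝ) + 1 - (k:ℝ))) := by
      rw [← Real.rpow_add h1θ]
      congr 1
      ring
    have e5 : u ^ (-((k:ℝ) - 1)) = u ^ (-(k:ℝ)) * u := by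
      rw [show -((k:ℝ) - 1) = -(k:ℝ) + 1 by ring, Real.rpow_add hu0, Real.rpow_one]
    rw [e1, e2, e3, e5]
    calc (1 - θ) ^ ((k:ℝ) - 1) * (u ^ (-(k:ℝ)) * u) * (1 - θ) ^ (-(n:ℝ))
        = ((1 - θ) ^ ((k:ℝ) - 1) * (1 - θ) ^ (-(n:ℝ))) * u ^ (-(k:ℝ)) * u := by ring
      _ = (1 - θ) ^ (-((n : ℝ) + 1 - (k:ℝ))) * u ^ (-(k:ℝ)) * u := by rw [e4]
      _ ≤ (1 - θ) ^ (-((n : ℝ) + 1 - (k:ℝ))) * u ^ (-(k:ℝ)) := by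
          apply mul_le_of_le_one_right (by positivity) hu1.le
  · -- trivial case : RHS ≥ 1
    have hP1 : (P {ω | b < orderStat n (fun i => T i.1 ω) k}).toReal ≤ 1 := by
      have := prob_le_one (μ := P) (s := {ω | b < orderStat n (fun i => T i.1 ω) k})
      exact_mod_cast ENNReal.toReal_le_of_le_ofReal one_pos.le (by simpa using this)
    refine hP1.trans ?_
    set w₁ : ℝ := ((n:ℝ) + 1 - (k:ℝ)) / ((n:ℝ) + 1) with hw₁
    set w₂ : ℝ := (k:ℝ) / ((n:ℝ) + 1) with hw₂
    have hn1 : (0:ℝ) < (n:ℝ) + 1 := by positivity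
    have hkn' : (k:ℝ) ≤ (n:ℝ) := by exact_mod_cast hkn
    have hw₁0 : 0 ≤ w₁ := by rw [hw₁]; apply div_nonneg (by linarith) hn1.le
    have hw₂0 : 0 ≤ w₂ := by rw [hw₂]; positivity
    have hsum : w₁ + w₂ = 1 := by rw [hw₁, hw₂]; field_simp; ring
    have hmean : w₁ * (1 - θ) + w₂ * u ≤ 1 := by
      rw [hw₁, hw₂, hu]
      rw [div_mul_eq_mul_div, div_mul_eq_mul_div, ← add_div, div_le_one hn1]
      have hkb' : (k:ℝ) * (1 - b) ≤ b * ((n:ℝ) + 1 - (k:ℝ)) := by nlinarith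
      have : θ * ((k:ℝ) * (1 - b) / b - ((n:ℝ) + 1 - (k:ℝ))) ≤ 0 := by
        apply mul_nonpos_of_nonneg_of_nonpos hθpos
        rw [sub_nonpos, div_le_iff₀ hb0]
        nlinarith
      have hexp : ((n:ℝ) + 1 - (k:ℝ)) * (1 - θ) + (k:ℝ) * (1 + θ * (1 - b) / b)
          = ((n:ℝ) + 1) + θ * ((k:ℝ) * (1 - b) / b - ((n:ℝ) + 1 - (k:ℝ))) := by
        field_simp
        ring
      linarith [hexp.le]
    have hG : (1 - θ) ^ w₁ * u ^ w₂ ≤ 1 :=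
      (Real.geom_mean_le_arith_mean2_weighted hw₁0 hw₂0 h1θ.le hu0.le hsum).trans hmean
    have hGpow : ((1 - θ) ^ w₁ * u ^ w₂) ^ ((n:ℝ) + 1) ≤ 1 :=
      Real.rpow_le_one (by positivity) hG hn1.le
    have hident : ((1 - θ) ^ w₁ * u ^ w₂) ^ ((n:ℝ) + 1)
        = (1 - θ) ^ ((n : ℝ) + 1 - (k:ℝ)) * u ^ ((k:ℝ)) := by
      rw [Real.mul_rpow (by positivity) (by positivity),
        ← Real.rpow_mul h1θ.le, ← Real.rpow_mul hu0.le]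
      congr 2
      · rw [hw₁]; field_simp
      · rw [hw₂]; field_simp
    rw [hident] at hGpow
    have hpos : 0 < (1 - θ) ^ ((n : ℝ) + 1 - (k:ℝ)) * u ^ ((k:ℝ)) := by positivity
    have h9 : (1:ℝ) ≤ ((1 - θ) ^ ((n : ℝ) + 1 - (k:ℝ)) * u ^ ((k:ℝ)))⁻¹ := by
      rw [← one_div, le_div_iff₀ hpos]
      linarith
    rw [Real.rpow_neg h1θ.le, Real.rpow_neg hu0.le, ← mul_inv]
    exact h9
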